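/- arXiv:1605.03400 — 2 statements merged into one kernel-verified Lean document; each statement's English description precedes it below -/
import Mathlib

section
/- Let $V$ be a complex normed space, $B : V \times V \to \mathbb{C}$ a sesquilinear form, $C_{\min} > 0$, and $\|\cdot\|_*$ a seminorm on $V$ such that the Gårding inequality $\operatorname{Re} B(v,v) + 2\|v\|_*^2 \geq C_{\min} \|v\|^2$ holds for all $v \in V$. Suppose $u, u_h \in V$ satisfy Galerkin orthogonality $B(u - u_h, w_h) = 0$ for all $w_h$ in a subspace $V_h \ni u_h$, $B$ is continuous with constant $C_B$, and the dual-norm estimate $\|u - u_h\|_*^2 \leq \eta \, C_B \|u - u_h\|^2$ holds with $4\eta C_B \leq C_{\min}$. Then $\|u - u_h\| \leq \frac{2 C_B}{C_{\min}} \inf_{v_h \in V_h} \|u - v_h\|$. -/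
/-- Abstract Schatz-type quasi-optimality (Céa lemma for indefinite sesquilinear forms):
under a Gårding inequality `Re B(v,v) + 2‖v‖_*² ≥ C_min ‖v‖²`, continuity with constant
`C_B`, Galerkin orthogonality and the dual-norm estimate
`‖u-u_h‖_*² ≤ η C_B ‖u-u_h‖²` with `4 η C_B ≤ C_min`, one has
`‖u-u_h‖ ≤ (2C_B/C_min) ‖u-v_h‖` for every `v_h` in the discrete space. -/
theorem stmt_6 {V : Type*} [NormedAddCommGroup V] [NormedSpace ℂ V]
    (B : V → V → ℂ) (Nstar : V → ℝ) (Cmin CB η : ℝ)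
    (hCmin : 0 < Cmin) (hCB : 0 < CB) (hη : 0 ≤ η)
    (haddr : ∀ v w₁ w₂, B v (w₁ + w₂) = B v w₁ + B v w₂)
    (hN : ∀ v, 0 ≤ Nstar v)
    (hgarding : ∀ v, Cmin * ‖v‖ ^ 2 ≤ (B v v).re + 2 * Nstar v ^ 2)
    (hcont : ∀ v w, ‖B v w‖ ≤ CB * ‖v‖ * ‖w‖)
    (Vh : Submodule ℂ V) (u uh : V) (huh : uh ∈ Vh)
    (hGal : ∀ wh ∈ Vh, B (u - uh) wh = 0)
    (hdual : Nstar (u - uh) ^ 2 ≤ η * CB * ‖u - uh‖ ^ 2)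
    (habs : 4 * η * CB ≤ Cmin) :
    ∀ vh ∈ Vh, ‖u - uh‖ ≤ 2 * CB / Cmin * ‖u - vh‖ := by
  intro vh hvh
  set e := u - uh with he
  by_cases hz : ‖e‖ = 0
  · rw [hz]
    positivity
  have hen : 0 < ‖e‖ := lt_of_le_of_ne (norm_nonneg _) (Ne.symm hz)
  have hsplit : B e e = B e (u - vh) + B e (vh - uh) := by
    rw [← haddr]
    congr 1
    rw [he]
    abel
  have hgal0 : B e (vh - uh) = 0 := hGal _ (Vh.sub_mem hvh huh)
  have hBe : B e e = B e (u - vh) := by rw [hsplit, hgal0, add_zero]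
  have hre : (B e e).re ≤ CB * ‖e‖ * ‖u - vh‖ := by
    calc (B e e).re ≤ ‖B e (u - vh)‖ := by
          rw [hBe]
          exact Complex.re_le_norm _
      _ ≤ CB * ‖e‖ * ‖u - vh‖ := hcont _ _
  have key : Cmin * ‖e‖ ^ 2 ≤ CB * ‖e‖ * ‖u - vh‖ + 2 * (η * CB * ‖e‖ ^ 2) := by
    calc Cmin * ‖e‖ ^ 2 ≤ (B e e).re + 2 * Nstar e ^ 2 := hgarding e
      _ ≤ CB * ‖e‖ * ‖u - vh‖ + 2 * (η * CB * ‖e‖ ^ 2) := by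
          gcongr
  have h2 : (Cmin / 2) * ‖e‖ ^ 2 ≤ CB * ‖e‖ * ‖u - vh‖ := by nlinarith
  have h3 : (Cmin / 2) * ‖e‖ ≤ CB * ‖u - vh‖ := by
    have := mul_le_mul_of_nonneg_right h2 (le_of_lt (inv_pos.mpr hen))
    nlinarith [mul_pos hen hen]
  rw [div_mul_eq_mul_div, le_div_iff₀ hCmin]
  nlinarith
end

section
/- Let $V$ be a complex Hilbert space, $B$ a continuous sesquilinear form on $V$ with constant $C_B$, satisfying the Gårding inequality $\operatorname{Re} B(v,v) + 2 k^2 \|v\|_0^2 \geq C_{\min} \|v\|^2$ where $\|\cdot\|_0 \leq k^{-1}\|\cdot\|$ is a weaker seminorm. Suppose for every $v \in V$ there is $z \in V$ solving the dual problem $B(\psi, z) = 2k^2 \langle \psi, v \rangle_0$ for all $\psi$, with stability bound $\|z\| \leq C_s k^{q+1} \|v\|$ for some $q \geq 0$, $C_s > 0$, $k \geq k_0 > 0$. Then the inf-sup constant satisfies $\inf_{v \neq 0} \sup_{\psi \neq 0} \frac{\operatorname{Re} B(v, \psi)}{\|v\| \|\psi\|} \geq \frac{C_{\min}}{(k_0^{-(q+1)}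 + C_s) \, k^{q+1}}$. -/
/-- Abstract inf-sup bound from polynomial stability of a dual problem: if `B` satisfies
the Gårding inequality `Re B(v,v) + 2k²‖v‖₀² ≥ C_min ‖v‖²`, the seminorm `‖·‖₀` is weaker
(`‖v‖₀ ≤ k⁻¹‖v‖`), and for every `v` the dual problem `B(ψ,z) = 2k²⟨ψ,v⟩₀` has a solution
with `‖z‖ ≤ C_s k^{q+1} ‖v‖`, then for every `v ≠ 0` there is a test function `ψ ≠ 0` with
`Re B(v,ψ) ≥ C_min/((k₀^{-(q+1)} + C_s) k^{q+1}) ‖v‖ ‖ψ‖`, i.e. the inf-sup constant is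
at least `C_min/((k₀^{-(q+1)} + C_s) k^{q+1})`. -/
theorem stmt_7 {V : Type*} [NormedAddCommGroup V] [InnerProductSpace ℂ V] [CompleteSpace V]
    (B : V → V → ℂ) (inner0 : V → V → ℂ) (N0 : V → ℝ)
    (k k0 Cmin Cs : ℝ) (q : ℕ)
    (hk0 : 0 < k0) (hk : k0 ≤ k) (hCmin : 0 < Cmin) (hCs : 0 < Cs)
    (haddr : ∀ v w₁ w₂, B v (w₁ + w₂) = B v w₁ + B v w₂)
    (hN0 : ∀ v, 0 ≤ N0 v)
    (hweak : ∀ v, N0 v ≤ k⁻¹ * ‖v‖)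
    (hinner : ∀ v, inner0 v v = ((N0 v ^ 2 : ℝ) : ℂ))
    (hgarding : ∀ v, Cmin * ‖v‖ ^ 2 ≤ (B v v).re + 2 * k ^ 2 * N0 v ^ 2)
    (hdual : ∀ v : V, ∃ z : V, (∀ ψ, B ψ z = 2 * k ^ 2 * inner0 ψ v) ∧
      ‖z‖ ≤ Cs * k ^ (q + 1) * ‖v‖) :
    ∀ v : V, v ≠ 0 → ∃ ψ : V, ψ ≠ 0 ∧
      Cmin / (((k0 ^ (q + 1))⁻¹ + Cs) * k ^ (q + 1)) * (‖v‖ * ‖ψ‖) ≤ (B v ψ).re := by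
  intro v hv
  obtain ⟨z, hz, hznorm⟩ := hdual v
  have hkpos : (0 : ℝ) < k := lt_of_lt_of_le hk0 hk
  have hk0p : (0 : ℝ) < k0 ^ (q + 1) := pow_pos hk0 _
  have hkp : (0 : ℝ) < k ^ (q + 1) := pow_pos hkpos _
  set D : ℝ := ((k0 ^ (q + 1))⁻¹ + Cs) * k ^ (q + 1) with hD
  have hDpos : 0 < D := by positivity
  set ψ : V := v + z with hψ
  -- key lower bound on Re B(v, ψ)
  have hBre : Cmin * ‖v‖ ^ 2 ≤ (B v ψ).re := by
    have h1 : B v ψ = B v v + ((2 * k ^ 2 * N0 v ^ 2 : ℝ) : ℂ) := by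
      rw [hψ, haddr, hz v, hinner]; push_cast; ring
    have h2 : (B v ψ).re = (B v v).re + 2 * k ^ 2 * N0 v ^ 2 := by
      rw [h1, Complex.add_re, Complex.ofReal_re]
    rw [h2]; exact hgarding v
  have hvpos : (0 : ℝ) < ‖v‖ := norm_pos_iff.mpr hv
  have hψne : ψ ≠ 0 := by
    intro h
    have h0 : B v 0 = 0 := by
      have h00 := haddr v 0 0
      simp at h00
      linear_combination h00
    have hre : (B v ψ).re = 0 := by rw [h, h0]; simp
    nlinarith [hBre, hre, pow_pos hvpos 2]
  refine ⟨ψ, hψne, ?_⟩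
  -- bound ‖ψ‖ ≤ D * ‖v‖
  have hψnorm : ‖ψ‖ ≤ D * ‖v‖ := by
    have h1 : ‖ψ‖ ≤ ‖v‖ + ‖z‖ := norm_add_le _ _
    have h2 : (1 : ℝ) ≤ (k0 ^ (q + 1))⁻¹ * k ^ (q + 1) := by
      rw [← div_eq_inv_mul, le_div_iff₀ hk0p]
      simpa using pow_le_pow_left₀ (le_of_lt hk0) hk (q + 1)
    have : ‖v‖ + ‖z‖ ≤ ((k0 ^ (q + 1))⁻¹ * k ^ (q + 1)) * ‖v‖ + Cs * k ^ (q + 1) * ‖v‖ := by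
      have := hznorm
      nlinarith
    calc ‖ψ‖ ≤ ‖v‖ + ‖z‖ := h1
      _ ≤ ((k0 ^ (q + 1))⁻¹ * k ^ (q + 1)) * ‖v‖ + Cs * k ^ (q + 1) * ‖v‖ := this
      _ = D * ‖v‖ := by ring
  calc Cmin / D * (‖v‖ * ‖ψ‖) ≤ Cmin / D * (‖v‖ * (D * ‖v‖)) := by
        apply mul_le_mul_of_nonneg_left _ (by positivity)
        exact mul_le_mul_of_nonneg_left hψnorm (norm_nonneg v)
    _ = Cmin * ‖v‖ ^ 2 := by field_simp
    _ ≤ (B v ψ).re := hBre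
end
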